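/- Let G be an abelian group, H ≤ G a finite subgroup, S a finite symmetric subset of G, r = |S|, α = |S \ H|, and suppose |H ∩ S| = r - α and |H| = r + β with β ≥ 0 and α + β ≥ 0. Then the number of ordered pairs (a,b) ∈ (H∩S)×(H∩S) with a+b ∈ S is at least (r-α)² - (α+β)(r+β) and at most (r-α)² - (α+β)(r+β) + 2(α+β)². -/
import Mathlib

open Finset

set_option maxHeartbeats 1000000 in
/-- Let `A` be an abelian group, `H` a finite subgroup, `S` a finite symmetric
subset with `|S| = r`, `|S \ H| = α`, `|H ∩ S| = r - α`, `|H| = r + β`. Then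
the number of ordered pairs `(a,b) ∈ (H∩S)×(H∩S)` with `a+b ∈ S` is at least
`(r-α)² - (α+β)(r+β)` and at most `(r-α)² - (α+β)(r+β) + 2(α+β)²`. -/
theorem stmt13 {A : Type*} [AddCommGroup A] (H : AddSubgroup A) (S : Set A)
    (hfin : S.Finite) (hsym : ∀ a ∈ S, -a ∈ S) (r α β : ℕ)
    (hr : S.ncard = r) (hα : (S \ (H : Set A)).ncard = α)
    (hcap : (((H : Set A) ∩ S).ncard : ℤ) = (r : ℤ) - (α : ℤ))
    (hH : Nat.card H = r + β) :
    ((r : ℤ) - α) ^ 2 - ((α : ℤ) + β) * ((r : ℤ) + β) ≤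
      ({p : A × A | p.1 ∈ (H : Set A) ∩ S ∧ p.2 ∈ (H : Set A) ∩ S ∧
        p.1 + p.2 ∈ S}.ncard : ℤ) ∧
    ({p : A × A | p.1 ∈ (H : Set A) ∩ S ∧ p.2 ∈ (H : Set A) ∩ S ∧
        p.1 + p.2 ∈ S}.ncard : ℤ) ≤
      ((r : ℤ) - α) ^ 2 - ((α : ℤ) + β) * ((r : ℤ) + β) + 2 * ((α : ℤ) + β) ^ 2 := by
  classical
  by_cases hHfin : (H : Set A).Finite
  case neg =>
    have h0 : Nat.card H = 0 := by
      rw [Nat.card_eq_zero]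
      right
      exact Set.infinite_coe_iff.mpr hHfin
    have hr0 : r = 0 := by omega
    have hβ0 : β = 0 := by omega
    have hS : S = ∅ := by
      rw [← Set.ncard_eq_zero hfin, hr, hr0]
    subst hS
    simp only [Set.inter_empty, Set.ncard_empty, Nat.cast_zero] at hcap
    have hα0 : (α : ℤ) = (r : ℤ) := by linarith
    have hset : {p : A × A | p.1 ∈ (H : Set A) ∩ (∅ : Set A) ∧
        p.2 ∈ (H : Set A) ∩ (∅ : Set A) ∧ p.1 + p.2 ∈ (∅ : Set A)} = ∅ := by
      ext p; simp
    rw [hset]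
    simp only [Set.ncard_empty, Nat.cast_zero, hr0, Nat.cast_zero, hβ0]
    constructor <;> nlinarith
  case pos =>
  set Hf : Finset A := hHfin.toFinset with hHf
  set Sf : Finset A := hfin.toFinset with hSf
  have memHf : ∀ a, a ∈ Hf ↔ a ∈ H := by intro a; simp [hHf]
  have memSf : ∀ a, a ∈ Sf ↔ a ∈ S := by intro a; simp [hSf]
  set K : Finset A := Hf ∩ Sf with hK
  set D : Finset A := Hf \ Sf with hD
  -- cardinalities
  have hHcard : (Hf.card : ℤ) = (r : ℤ) + β := by
    have : Nat.card H = Hf.card := by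
      rw [show Nat.card H = Nat.card (H : Set A) from rfl, Nat.card_coe_set_eq,
        Set.ncard_eq_toFinset_card _ hHfin]
    rw [← this, hH]; push_cast; ring
  have hKcard : (K.card : ℤ) = (r : ℤ) - α := by
    have : ((K : Finset A) : Set A) = (H : Set A) ∩ S := by
      ext a; simp [hK, memHf, memSf]
    rw [← hcap, ← Set.ncard_coe_finset K, this]
  have hDcard : (D.card : ℤ) = (α : ℤ) + β := by
    have h1 : (Hf \ Sf).card + (Hf ∩ Sf).card = Hf.card :=
      Finset.card_sdiff_add_card_inter Hf Sf
    have h2 : ((Hf \ Sf).card : ℤ) + ((Hf ∩ Sf).card : ℤ) = (Hf.card : ℤ) := by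
      exact_mod_cast h1
    rw [← hK] at h2
    rw [hKcard, hHcard] at h2
    linarith [h2]
  -- closure
  have hclose : ∀ a ∈ Hf, ∀ b ∈ Hf, a + b ∈ Hf := by
    intro a ha b hb
    rw [memHf] at *
    exact H.add_mem ha hb
  have hsub : ∀ a ∈ Hf, ∀ b ∈ Hf, b - a ∈ Hf := by
    intro a ha b hb
    rw [memHf] at *
    exact H.sub_mem hb ha
  -- key counting lemmas
  have key1 : ∀ X D' : Finset A, X ⊆ Hf → D' ⊆ Hf →
      ((X ×ˢ Hf).filter (fun p => p.1 + p.2 ∈ D')).card = X.card * D'.card := by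
    intro X D' hX hD'
    rw [← Finset.card_product]
    apply Finset.card_bij (fun p _ => (p.1, p.1 + p.2))
    · intro p hp
      simp only [Finset.mem_filter, Finset.mem_product] at hp ⊢
      exact ⟨hp.1.1, hp.2⟩
    · intro p hp q hq h
      simp only [Prod.mk.injEq] at h
      obtain ⟨h1, h2⟩ := h
      rw [h1] at h2
      have := add_left_cancel h2
      exact Prod.ext h1 this
    · intro q hq
      simp only [Finset.mem_product] at hq
      refine ⟨(q.1, q.2 - q.1), ?_, ?_⟩
      · simp only [Finset.mem_filter, Finset.mem_product]
        refine ⟨⟨hq.1, hsub q.1 (hX hq.1) q.2 (hD' hq.2)⟩, ?_⟩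
        simpa using hq.2
      · simp
  have key2 : ∀ Y D' : Finset A, Y ⊆ Hf → D' ⊆ Hf →
      ((Hf ×ˢ Y).filter (fun p => p.1 + p.2 ∈ D')).card = Y.card * D'.card := by
    intro Y D' hY hD'
    rw [← Finset.card_product]
    apply Finset.card_bij (fun p _ => (p.2, p.1 + p.2))
    · intro p hp
      simp only [Finset.mem_filter, Finset.mem_product] at hp ⊢
      exact ⟨hp.1.2, hp.2⟩
    · intro p hp q hq h
      simp only [Prod.mk.injEq] at h
      obtain ⟨h1, h2⟩ := h
      rw [h1] at h2
      have := add_right_cancel h2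
      exact Prod.ext this h1
    · intro q hq
      simp only [Finset.mem_product] at hq
      refine ⟨(q.2 - q.1, q.1), ?_, ?_⟩
      · simp only [Finset.mem_filter, Finset.mem_product]
        refine ⟨⟨hsub q.1 (hY hq.1) q.2 (hD' hq.2), hq.1⟩, ?_⟩
        simpa using hq.2
      · simp
  -- partition of Hf
  have hpart : K ∪ D = Hf := by
    rw [hK, hD, Finset.union_comm, Finset.sdiff_union_inter]
  have hdisj : Disjoint K D := by
    rw [Finset.disjoint_left]
    intro a haK haD
    rw [hK, Finset.mem_inter] at haK
    rw [hD, Finset.mem_sdiff] at haD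
    exact haD.2 haK.2
  -- splits
  have split1 : ((Hf ×ˢ Hf).filter (fun p => p.1 + p.2 ∈ D)).card =
      ((K ×ˢ Hf).filter (fun p => p.1 + p.2 ∈ D)).card +
      ((D ×ˢ Hf).filter (fun p => p.1 + p.2 ∈ D)).card := by
    have e1 : Hf ×ˢ Hf = (K ×ˢ Hf) ∪ (D ×ˢ Hf) := by
      rw [← Finset.union_product, hpart]
    rw [e1, Finset.filter_union]
    apply Finset.card_union_of_disjoint
    apply Finset.disjoint_filter_filter
    rw [Finset.disjoint_left]
    intro p hp hp'
    rw [Finset.mem_product] at hp hp'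
    exact (Finset.disjoint_left.mp hdisj) hp.1 hp'.1
  have split2 : ((K ×ˢ Hf).filter (fun p => p.1 + p.2 ∈ D)).card =
      ((K ×ˢ K).filter (fun p => p.1 + p.2 ∈ D)).card +
      ((K ×ˢ D).filter (fun p => p.1 + p.2 ∈ D)).card := by
    have e2 : K ×ˢ Hf = (K ×ˢ K) ∪ (K ×ˢ D) := by
      rw [← Finset.product_union, hpart]
    rw [e2, Finset.filter_union]
    apply Finset.card_union_of_disjoint
    apply Finset.disjoint_filter_filter
    rw [Finset.disjoint_left]
    intro p hp hp'
    rw [Finset.mem_product] at hp hp'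
    exact (Finset.disjoint_left.mp hdisj) hp.2 hp'.2
  have hKsub : K ⊆ Hf := Finset.inter_subset_left
  have hDsub : D ⊆ Hf := Finset.sdiff_subset
  -- bound on F(K,D)
  have hFKD_le : ((K ×ˢ D).filter (fun p => p.1 + p.2 ∈ D)).card ≤ D.card * D.card := by
    rw [← key2 D D hDsub hDsub]
    apply Finset.card_le_card
    apply Finset.filter_subset_filter
    exact Finset.product_subset_product hKsub (le_refl D)
  have hFtot : ((Hf ×ˢ Hf).filter (fun p => p.1 + p.2 ∈ D)).card = Hf.card * D.card :=
    key1 Hf D (le_refl Hf) hDsub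
  have hFD : ((D ×ˢ Hf).filter (fun p => p.1 + p.2 ∈ D)).card = D.card * D.card :=
    key1 D D hDsub hDsub
  -- N bounds
  set N : ℕ := ((K ×ˢ K).filter (fun p => p.1 + p.2 ∈ D)).card with hN
  have hNle : (N : ℤ) ≤ ((r : ℤ) + β) * ((α : ℤ) + β) := by
    have : N ≤ Hf.card * D.card := by
      rw [← hFtot, split1, split2]; omega
    calc (N : ℤ) ≤ (Hf.card : ℤ) * (D.card : ℤ) := by exact_mod_cast this
      _ = ((r : ℤ) + β) * ((α : ℤ) + β) := by rw [hHcard, hDcard]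
  have hNge : ((r : ℤ) + β) * ((α : ℤ) + β) - 2 * ((α : ℤ) + β) ^ 2 ≤ (N : ℤ) := by
    have h1 : Hf.card * D.card ≤ N + D.card * D.card + D.card * D.card := by
      rw [← hFtot, split1, split2, hFD]
      omega
    have h2 : ((Hf.card : ℤ)) * D.card ≤ (N : ℤ) + D.card * D.card + D.card * D.card := by
      exact_mod_cast h1
    rw [hHcard, hDcard] at h2
    nlinarith [h2]
  -- relate T to K.card^2 - N
  set T : Finset (A × A) := (K ×ˢ K).filter (fun p => p.1 + p.2 ∈ Sf) with hT
  have hTN : T.card + N = K.card * K.card := by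
    have hcompl : (K ×ˢ K).filter (fun p => ¬ (p.1 + p.2 ∈ Sf)) =
        (K ×ˢ K).filter (fun p => p.1 + p.2 ∈ D) := by
      apply Finset.filter_congr
      intro p hp
      rw [Finset.mem_product] at hp
      have h1 : p.1 ∈ Hf := hKsub hp.1
      have h2 : p.2 ∈ Hf := hKsub hp.2
      have hsum : p.1 + p.2 ∈ Hf := hclose _ h1 _ h2
      simp [hD, Finset.mem_sdiff, hsum]
    have := Finset.card_filter_add_card_filter_not
      (s := K ×ˢ K) (p := fun p => p.1 + p.2 ∈ Sf)
    rw [hcompl] at this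
    rw [hT, hN]
    rw [this, Finset.card_product]
  -- identify the set with T
  have hsetT : {p : A × A | p.1 ∈ (H : Set A) ∩ S ∧ p.2 ∈ (H : Set A) ∩ S ∧
      p.1 + p.2 ∈ S} = (T : Set (A × A)) := by
    ext p
    constructor
    · rintro ⟨⟨h1H, h1S⟩, ⟨h2H, h2S⟩, hsumS⟩
      rw [Finset.mem_coe, hT, Finset.mem_filter, Finset.mem_product]
      refine ⟨⟨?_, ?_⟩, (memSf _).mpr hsumS⟩ <;>
        rw [hK, Finset.mem_inter, memHf, memSf] <;> exact ⟨‹_›, ‹_›⟩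
    · intro hp
      rw [Finset.mem_coe, hT, Finset.mem_filter, Finset.mem_product] at hp
      obtain ⟨⟨h1, h2⟩, h3⟩ := hp
      rw [hK, Finset.mem_inter, memHf, memSf] at h1 h2
      exact ⟨⟨h1.1, h1.2⟩, ⟨h2.1, h2.2⟩, (memSf _).mp h3⟩
  rw [hsetT, Set.ncard_coe_finset]
  have hTcard : (T.card : ℤ) = ((r : ℤ) - α) ^ 2 - (N : ℤ) := by
    have : (T.card : ℤ) + (N : ℤ) = (K.card : ℤ) * K.card := by exact_mod_cast hTN
    rw [hKcard] at this
    nlinarith [this]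
  rw [hTcard]
  constructor
  · nlinarith [hNle]
  · nlinarith [hNge]
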